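/- Let A be a magmatic algebra over a field K with a reduced unital-infinitesimal coproduct δ. For all n ≥ 2 and arbitrary elements x₁, …, xₙ ∈ A: δ(ωⁿ(x₁,…,xₙ)) = Σ_{i=1}^{n−1} ωⁱ(x₁,…,xᵢ) ⊗ ω^{n−i}(x_{i+1},…,xₙ) + Σ_{j=1}^{n} (Lⱼ ⊗ Rⱼ)(δ(xⱼ)), where Lⱼ : A → A is the linear map Lⱼ(a) = ωʲ(x₁,…,x_{j−1},a) and Rⱼ : A → A is the linear map Rⱼ(a) = ω^{n−j+1}(a, x_{j+1},…,xₙ). -/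
import Mathlib


open TensorProduct

/-- A K-linear map `δ : A → A ⊗ A` satisfies the reduced unital-infinitesimal
compatibility relation if
`δ(a·b) = (id ⊗ mulRight b)(δ a) + (mulLeft a ⊗ id)(δ b) + a ⊗ b` for all `a b`. -/
def IsUICoproduct (K : Type*) [Field K] (A : Type*) [NonUnitalNonAssocRing A]
    [Module K A] [SMulCommClass K A A] [IsScalarTower K A A]
    (δ : A →ₗ[K] A ⊗[K] A) : Prop :=
  ∀ a b : A,
    δ (a * b) =
      TensorProduct.map LinearMap.id (LinearMap.mulRight K b) (δ a) +
      TensorProduct.map (LinearMap.mulLeft K a) LinearMap.id (δ b) +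
      a ⊗ₜ[K] b

/-- The left comb `ωⁿ(x₁,…,xₙ) = ((x₁·x₂)·x₃)⋯·xₙ`, given on the (nonempty) list
of its arguments (junk value `0` on the empty list). -/
def leftComb {A : Type*} [Mul A] [Zero A] : List A → A
  | [] => 0
  | x :: xs => xs.foldl (· * ·) x

set_option linter.unusedSectionVars false

section Aux
variable (K : Type*) [Field K] {A : Type*} [NonUnitalNonAssocRing A]
    [Module K A] [SMulCommClass K A A] [IsScalarTower K A A]

lemma leftComb_concat (x : A) : ∀ (s : List A), s ≠ [] →
    leftComb (s ++ [x]) = leftComb s * x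
  | y :: ys, _ => by simp [leftComb, List.foldl_append]

def Rcomb : List A → A →ₗ[K] A
  | [] => LinearMap.id
  | x :: xs => (Rcomb xs).comp (LinearMap.mulRight K x)

lemma Rcomb_apply : ∀ (s : List A) (a : A), Rcomb K s a = leftComb (a :: s)
  | [], a => rfl
  | x :: xs, a => by
      rw [Rcomb, LinearMap.comp_apply, Rcomb_apply, LinearMap.mulRight_apply]
      rfl

def Lcomb : List A → A →ₗ[K] A
  | [] => LinearMap.id
  | x :: xs => LinearMap.mulLeft K (leftComb (x :: xs))

lemma Lcomb_ne_nil (s : List A) (h : s ≠ []) :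
    Lcomb K s = LinearMap.mulLeft K (leftComb s) := by
  cases s with
  | nil => exact absurd rfl h
  | cons x xs => rfl

lemma Lcomb_apply (s : List A) (a : A) : Lcomb K s a = leftComb (s ++ [a]) := by
  cases s with
  | nil => rfl
  | cons x xs =>
      rw [Lcomb_ne_nil K _ (by simp), LinearMap.mulLeft_apply,
        leftComb_concat a _ (by simp)]

lemma Rcomb_concat (s : List A) (x : A) :
    Rcomb K (s ++ [x]) = (LinearMap.mulRight K x).comp (Rcomb K s) := by
  ext a
  rw [LinearMap.comp_apply, Rcomb_apply, Rcomb_apply, LinearMap.mulRight_apply,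
    ← leftComb_concat x (a :: s) (by simp), List.cons_append]

theorem key (δ : A →ₗ[K] A ⊗[K] A) (hui : IsUICoproduct K A δ) :
    ∀ n, 2 ≤ n → ∀ l : List A, l.length = n →
      δ (leftComb l) =
        ∑ i ∈ Finset.Icc 1 (n - 1),
          (leftComb (l.take i)) ⊗ₜ[K] (leftComb (l.drop i)) +
        ∑ j ∈ Finset.Icc 1 n,
          TensorProduct.map (Lcomb K (l.take (j - 1))) (Rcomb K (l.drop j))
            (δ (l.getD (j - 1) 0)) := by
  intro n hn
  induction n, hn using Nat.le_induction with
  | base =>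
      intro l hl
      match l, hl with
      | [a, b], _ =>
        have hcomb : leftComb [a, b] = a * b := rfl
        have h1 : Rcomb K [b] = LinearMap.mulRight K b := by
          ext t; simp [Rcomb]
        have h2 : Lcomb K [a] = LinearMap.mulLeft K a := rfl
        have h3 : Rcomb K ([] : List A) = LinearMap.id := rfl
        have h4 : Lcomb K ([] : List A) = LinearMap.id := rfl
        rw [hcomb, hui a b,
          show Finset.Icc 1 (2-1) = ({1} : Finset ℕ) by decide,
          show Finset.Icc 1 2 = ({1, 2} : Finset ℕ) by decide,
          Finset.sum_singleton, Finset.sum_pair (by norm_num)]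
        simp only [show ([a,b] : List A).take 1 = [a] from rfl,
          show ([a,b] : List A).drop 1 = [b] from rfl,
          show ([a,b] : List A).take 0 = [] from rfl,
          show ([a,b] : List A).drop 2 = [] from rfl,
          show ([a,b] : List A).getD 0 0 = a from rfl,
          show ([a,b] : List A).getD 1 0 = b from rfl,
          show leftComb [a] = a from rfl, show leftComb [b] = b from rfl,
          h1, h2, h3, h4]
        abel
  | succ n hn2 ih =>
      intro l hl
      rcases l.eq_nil_or_concat with rfl | ⟨l', x, rfl⟩
      · simp at hl
      rw [List.concat_eq_append] at *
      have hl' : l'.length = n := by simpa using hl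
      have hl'ne : l' ≠ [] := by
        intro h; rw [h] at hl'; simp at hl'; omega
      rw [leftComb_concat x l' hl'ne, hui, ih l' hl']
      have hn1 : n - 1 + 1 = n := by omega
      have hA : ∀ i ∈ Finset.Icc 1 (n-1),
          TensorProduct.map (LinearMap.id (R := K)) (LinearMap.mulRight K x)
            (leftComb (l'.take i) ⊗ₜ[K] leftComb (l'.drop i))
          = leftComb ((l' ++ [x]).take i) ⊗ₜ[K] leftComb ((l' ++ [x]).drop i) := by
        intro i hi
        simp only [Finset.mem_Icc] at hi
        have hne : l'.drop i ≠ [] := by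
          intro h
          have := congrArg List.length h
          rw [List.length_drop, hl'] at this
          simp at this; omega
        rw [TensorProduct.map_tmul, LinearMap.id_apply, LinearMap.mulRight_apply,
          List.take_append_of_le_length (by omega),
          List.drop_append_of_le_length (by omega),
          leftComb_concat x _ hne]
      have hB : ∀ j ∈ Finset.Icc 1 n,
          TensorProduct.map (LinearMap.id (R := K)) (LinearMap.mulRight K x)
            (TensorProduct.map (Lcomb K (l'.take (j-1))) (Rcomb K (l'.drop j))
              (δ (l'.getD (j-1) 0)))
          = TensorProduct.map (Lcomb K ((l' ++ [x]).take (j-1)))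
              (Rcomb K ((l' ++ [x]).drop j)) (δ ((l' ++ [x]).getD (j-1) 0)) := by
        intro j hj
        simp only [Finset.mem_Icc] at hj
        rw [← LinearMap.comp_apply, ← TensorProduct.map_comp, LinearMap.id_comp,
          List.take_append_of_le_length (by omega),
          List.drop_append_of_le_length (by omega),
          List.getD_append _ _ _ _ (by omega),
          Rcomb_concat]
      have hC : leftComb ((l' ++ [x]).take n) ⊗ₜ[K] leftComb ((l' ++ [x]).drop n)
          = leftComb l' ⊗ₜ[K] x := by
        rw [List.take_append_of_le_length (by omega),
          List.drop_append_of_le_length (by omega),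
          List.take_of_length_le (by omega), List.drop_eq_nil_of_le (by omega),
          List.nil_append]
        rfl
      have hD : TensorProduct.map (Lcomb K ((l' ++ [x]).take (n + 1 - 1)))
            (Rcomb K ((l' ++ [x]).drop (n+1))) (δ ((l' ++ [x]).getD (n + 1 - 1) 0))
          = TensorProduct.map (LinearMap.mulLeft K (leftComb l')) LinearMap.id (δ x) := by
        rw [show n + 1 - 1 = n from rfl,
          List.take_append_of_le_length (by omega),
          List.take_of_length_le (by omega),
          List.drop_eq_nil_of_le (by simp [hl']),
          List.getD_append_right _ _ _ _ (by omega), hl', Nat.sub_self,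
          show ([x] : List A).getD 0 0 = x from rfl,
          Lcomb_ne_nil K l' hl'ne]
        rfl
      rw [map_add, map_sum, map_sum,
        Finset.sum_congr rfl hA, Finset.sum_congr rfl hB,
        show n + 1 - 1 = n from rfl,
        Finset.sum_Icc_succ_top (show 1 ≤ n + 1 by omega), hD]
      have hsplit : (∑ i ∈ Finset.Icc 1 n,
            leftComb ((l'++[x]).take i) ⊗ₜ[K] leftComb ((l'++[x]).drop i))
          = ∑ i ∈ Finset.Icc 1 (n-1),
              leftComb ((l'++[x]).take i) ⊗ₜ[K] leftComb ((l'++[x]).drop i)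
            + leftComb l' ⊗ₜ[K] x := by
        conv_lhs => rw [← hn1]
        rw [Finset.sum_Icc_succ_top (by omega), hn1, hC]
      rw [hsplit]
      abel
end Aux

/-- The coproduct of a left comb of arbitrary elements `x₁,…,xₙ` (the entries of the
list `l`, so `xⱼ = l.getD (j-1) 0`):
`δ(ωⁿ(x₁,…,xₙ)) = Σ_{i=1}^{n-1} ωⁱ(x₁,…,xᵢ) ⊗ ω^{n-i}(x_{i+1},…,xₙ)
  + Σ_{j=1}^{n} (Lⱼ ⊗ Rⱼ)(δ xⱼ)`,
where `Lⱼ(a) = ωʲ(x₁,…,x_{j-1},a)` and `Rⱼ(a) = ω^{n-j+1}(a,x_{j+1},…,xₙ)`. -/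
theorem ui_coproduct_leftComb_general
    (K : Type*) [Field K] (A : Type*) [NonUnitalNonAssocRing A]
    [Module K A] [SMulCommClass K A A] [IsScalarTower K A A]
    (δ : A →ₗ[K] A ⊗[K] A) (hui : IsUICoproduct K A δ)
    (n : ℕ) (hn : 2 ≤ n) (l : List A) (hl : l.length = n)
    (L R : ℕ → A →ₗ[K] A)
    (hL : ∀ j ∈ Finset.Icc 1 n, ∀ a : A, L j a = leftComb (l.take (j - 1) ++ [a]))
    (hR : ∀ j ∈ Finset.Icc 1 n, ∀ a : A, R j a = leftComb (a :: l.drop j)) :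
    δ (leftComb l) =
      ∑ i ∈ Finset.Icc 1 (n - 1),
        (leftComb (l.take i)) ⊗ₜ[K] (leftComb (l.drop i)) +
      ∑ j ∈ Finset.Icc 1 n,
        TensorProduct.map (L j) (R j) (δ (l.getD (j - 1) 0)) := by
  have h := key K δ hui n hn l hl
  rw [h]
  congr 1
  refine Finset.sum_congr rfl fun j hj => ?_
  have h1 : Lcomb K (l.take (j-1)) = L j := by
    ext a; rw [Lcomb_apply, hL j hj a]
  have h2 : Rcomb K (l.drop j) = R j := by
    ext a; rw [Rcomb_apply, hR j hj a]
  rw [h1, h2]
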